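/- The real 3-arrangement A with defining polynomial y·(x−y)·(x²−z²)·(y²−z²) is not simplicial: at least one chamber of the complement ℝ³ \ ⋃A is not an open simplicial cone (i.e., is not the set of positive linear combinations of 3 linearly independent vectors). -/

import Mathlib

open Set

def Aexp : Set (Set (Fin 3 → ℝ)) :=
  { {v | v 1 = 0}, {v | v 0 - v 1 = 0},
    {v | v 0 + v 2 = 0}, {v | v 0 - v 2 = 0},
    {v | v 1 + v 2 = 0}, {v | v 1 - v 2 = 0} }

def Mexp : Set (Fin 3 → ℝ) := (⋃₀ Aexp)ᶜ

def Sset : Set (Fin 3 → ℝ) :=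
  {v | 0 < v 1 ∧ 0 < v 1 - v 0 ∧ 0 < -v 0 - v 2 ∧ 0 < v 2 - v 0 ∧
       0 < v 1 + v 2 ∧ 0 < v 1 - v 2}

lemma mem_Mexp {v : Fin 3 → ℝ} :
    v ∈ Mexp ↔ v 1 ≠ 0 ∧ v 0 - v 1 ≠ 0 ∧ v 0 + v 2 ≠ 0 ∧ v 0 - v 2 ≠ 0 ∧
      v 1 + v 2 ≠ 0 ∧ v 1 - v 2 ≠ 0 := by
  simp only [Mexp, Aexp, Set.mem_compl_iff, Set.mem_sUnion, Set.mem_insert_iff,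
    Set.mem_singleton_iff]
  push_neg
  constructor
  · intro h
    refine ⟨?_, ?_, ?_, ?_, ?_, ?_⟩ <;> [skip; skip; skip; skip; skip; skip]
    · exact fun h0 => (h _ (Or.inl rfl)) h0
    · exact fun h0 => (h _ (Or.inr (Or.inl rfl))) h0
    · exact fun h0 => (h _ (Or.inr (Or.inr (Or.inl rfl)))) h0
    · exact fun h0 => (h _ (Or.inr (Or.inr (Or.inr (Or.inl rfl))))) h0
    · exact fun h0 => (h _ (Or.inr (Or.inr (Or.inr (Or.inr (Or.inl rfl)))))) h0
    · exact fun h0 => (h _ (Or.inr (Or.inr (Or.inr (Or.inr (Or.inr rfl)))))) h0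
  · rintro ⟨h1, h2, h3, h4, h5, h6⟩ t (rfl | rfl | rfl | rfl | rfl | rfl) <;>
      simpa using (by assumption : _)

lemma Sset_subset_M : Sset ⊆ Mexp := by
  intro v hv
  obtain ⟨a1, a2, a3, a4, a5, a6⟩ := hv
  refine mem_Mexp.mpr ⟨by linarith, by linarith, by linarith, by linarith,
    by linarith, by linarith⟩

lemma pos_combo {a b X Y : ℝ} (ha : 0 ≤ a) (hb : 0 ≤ b) (hab : a + b = 1)
    (hX : 0 < X) (hY : 0 < Y) : 0 < a * X + b * Y := by
  rcases ha.lt_or_eq with h | h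
  · nlinarith [mul_nonneg hb hY.le, mul_pos h hX]
  · have hb1 : b = 1 := by linarith
    rw [← h, hb1]; nlinarith

lemma Sset_convex : Convex ℝ Sset := by
  intro p hp q hq a b ha hb hab
  obtain ⟨p1, p2, p3, p4, p5, p6⟩ := hp
  obtain ⟨q1, q2, q3, q4, q5, q6⟩ := hq
  have e : ∀ i : Fin 3, (a • p + b • q) i = a * p i + b * q i := by
    intro i; simp [smul_eq_mul]
  refine ⟨?_, ?_, ?_, ?_, ?_, ?_⟩ <;> simp only [e]
  · have := pos_combo ha hb hab p1 q1; linarith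
  · have := pos_combo ha hb hab p2 q2; nlinarith
  · have := pos_combo ha hb hab p3 q3; nlinarith
  · have := pos_combo ha hb hab p4 q4; nlinarith
  · have := pos_combo ha hb hab p5 q5; nlinarith
  · have := pos_combo ha hb hab p6 q6; nlinarith

def xpt : Fin 3 → ℝ := ![-2, 1, 0]

lemma xpt_mem_M : xpt ∈ Mexp := by
  refine mem_Mexp.mpr ?_
  norm_num [xpt, Matrix.cons_val_two, Matrix.vecHead, Matrix.vecTail]

lemma xpt_mem_S : xpt ∈ Sset := by
  refine ⟨?_, ?_, ?_, ?_, ?_, ?_⟩ <;> norm_num [xpt, Matrix.cons_val_two, Matrix.vecHead, Matrix.vecTail]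

lemma comp_pos {C : Set (Fin 3 → ℝ)} (hC : IsPreconnected C) (hCM : C ⊆ Mexp)
    (g : (Fin 3 → ℝ) → ℝ) (hg : Continuous g) (hgM : ∀ v ∈ Mexp, g v ≠ 0)
    {x y : Fin 3 → ℝ} (hx : x ∈ C) (hy : y ∈ C) (hgx : 0 < g x) : 0 < g y := by
  by_contra h
  push_neg at h
  have hyneg : g y < 0 := lt_of_le_of_ne h (hgM y (hCM hy))
  obtain ⟨z, hzC, hz1, hz2⟩ := hC {p | 0 < g p} {p | g p < 0}
    (isOpen_lt continuous_const hg) (isOpen_lt hg continuous_const)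
    (fun p hp => ((hgM p (hCM hp)).lt_or_gt).elim Or.inr Or.inl)
    ⟨x, hx, hgx⟩ ⟨y, hy, hyneg⟩
  have a1 : 0 < g z := hz1
  have a2 : g z < 0 := hz2
  linarith

lemma comp_eq : connectedComponentIn Mexp xpt = Sset := by
  apply Set.Subset.antisymm
  · intro y hy
    have hC : IsPreconnected (connectedComponentIn Mexp xpt) :=
      isPreconnected_connectedComponentIn
    have hCM : connectedComponentIn Mexp xpt ⊆ Mexp := connectedComponentIn_subset _ _
    have hx : xpt ∈ connectedComponentIn Mexp xpt := mem_connectedComponentIn xpt_mem_M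
    refine ⟨?_, ?_, ?_, ?_, ?_, ?_⟩
    · exact comp_pos hC hCM (fun v => v 1) (continuous_apply 1)
        (fun v hv => (mem_Mexp.mp hv).1) hx hy (by norm_num [xpt])
    · exact comp_pos hC hCM (fun v => v 1 - v 0)
        ((continuous_apply 1).sub (continuous_apply 0))
        (fun v hv h0 => (mem_Mexp.mp hv).2.1 (by have h0' : v 1 - v 0 = 0 := h0; linarith)) hx hy (by norm_num [xpt, Matrix.cons_val_two, Matrix.vecHead, Matrix.vecTail])
    · exact comp_pos hC hCM (fun v => -v 0 - v 2)
        ((continuous_apply 0).neg.sub (continuous_apply 2))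
        (fun v hv h0 => (mem_Mexp.mp hv).2.2.1 (by have h0' : -v 0 - v 2 = 0 := h0; linarith)) hx hy (by norm_num [xpt, Matrix.cons_val_two, Matrix.vecHead, Matrix.vecTail])
    · exact comp_pos hC hCM (fun v => v 2 - v 0)
        ((continuous_apply 2).sub (continuous_apply 0))
        (fun v hv h0 => (mem_Mexp.mp hv).2.2.2.1 (by have h0' : v 2 - v 0 = 0 := h0; linarith)) hx hy (by norm_num [xpt, Matrix.cons_val_two, Matrix.vecHead, Matrix.vecTail])
    · exact comp_pos hC hCM (fun v => v 1 + v 2)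
        ((continuous_apply 1).add (continuous_apply 2))
        (fun v hv h0 => (mem_Mexp.mp hv).2.2.2.2.1 (by have h0' : v 1 + v 2 = 0 := h0; linarith)) hx hy (by norm_num [xpt, Matrix.cons_val_two, Matrix.vecHead, Matrix.vecTail])
    · exact comp_pos hC hCM (fun v => v 1 - v 2)
        ((continuous_apply 1).sub (continuous_apply 2))
        (fun v hv h0 => (mem_Mexp.mp hv).2.2.2.2.2 (by have h0' : v 1 - v 2 = 0 := h0; linarith)) hx hy (by norm_num [xpt, Matrix.cons_val_two, Matrix.vecHead, Matrix.vecTail])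
  · exact Sset_convex.isPreconnected.subset_connectedComponentIn xpt_mem_S Sset_subset_M

def qpt : Fin 4 → (Fin 3 → ℝ) := ![![-1,2,1], ![-1,2,-1], ![-2,1,-1], ![-2,1,1]]

lemma qpt_not_mem (i : Fin 4) : qpt i ∉ Sset := by
  fin_cases i <;> · intro h; obtain ⟨a1, a2, a3, a4, a5, a6⟩ := h; norm_num [qpt, Matrix.cons_val_two, Matrix.vecHead, Matrix.vecTail] at *

lemma qpt_sum_mem {i j : Fin 4} (hij : i ≠ j) : qpt i + qpt j ∈ Sset := by
  fin_cases i <;> fin_cases j <;>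
    first
      | exact absurd rfl hij
      | refine ⟨?_, ?_, ?_, ?_, ?_, ?_⟩ <;> norm_num [qpt, Matrix.cons_val_two, Matrix.vecHead, Matrix.vecTail]

lemma exists_rep {u v w : Fin 3 → ℝ} (h : LinearIndependent ℝ ![u, v, w])
    (q : Fin 3 → ℝ) : ∃ r : Fin 3 → ℝ, q = r 0 • u + r 1 • v + r 2 • w := by
  have hcard : Fintype.card (Fin 3) = Module.finrank ℝ (Fin 3 → ℝ) := by
    simp [Module.finrank_fintype_fun_eq_card]
  set B := basisOfLinearIndependentOfCardEqFinrank h hcard with hB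
  refine ⟨fun i => B.repr q i, ?_⟩
  have hs := B.sum_repr q
  rw [Fin.sum_univ_three] at hs
  have hB0 : B 0 = u := by rw [hB, coe_basisOfLinearIndependentOfCardEqFinrank]; rfl
  have hB1 : B 1 = v := by rw [hB, coe_basisOfLinearIndependentOfCardEqFinrank]; rfl
  have hB2 : B 2 = w := by rw [hB, coe_basisOfLinearIndependentOfCardEqFinrank]; rfl
  rw [hB0, hB1, hB2] at hs
  exact hs.symm

lemma rep_unique {u v w : Fin 3 → ℝ} (h : LinearIndependent ℝ ![u, v, w])
    {a b c a' b' c' : ℝ}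
    (he : a • u + b • v + c • w = a' • u + b' • v + c' • w) :
    a = a' ∧ b = b' ∧ c = c' := by
  have h2 := Fintype.linearIndependent_iff.mp h ![a - a', b - b', c - c'] ?_
  · have e0 := h2 0; have e1 := h2 1; have e2 := h2 2
    norm_num [Matrix.cons_val_two, Matrix.vecHead, Matrix.vecTail] at e0 e1 e2
    exact ⟨by linarith, by linarith, by linarith⟩
  · rw [Fin.sum_univ_three]
    simp only [Matrix.cons_val_zero, Matrix.cons_val_one, Matrix.head_cons,
      Matrix.cons_val_two, Matrix.tail_cons]
    linear_combination (norm := module) he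

theorem stmt_11 :
    let A : Set (Set (Fin 3 → ℝ)) :=
      { {v | v 1 = 0}, {v | v 0 - v 1 = 0},
        {v | v 0 + v 2 = 0}, {v | v 0 - v 2 = 0},
        {v | v 1 + v 2 = 0}, {v | v 1 - v 2 = 0} }
    let M : Set (Fin 3 → ℝ) := (⋃₀ A)ᶜ
    ∃ x ∈ M, ∀ u v w : Fin 3 → ℝ, LinearIndependent ℝ ![u, v, w] →
      connectedComponentIn M x ≠
        {p | ∃ a b c : ℝ, 0 < a ∧ 0 < b ∧ 0 < c ∧ p = a • u + b • v + c • w} := by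
  intro A M
  have hM : M = Mexp := rfl
  refine ⟨xpt, ?_, ?_⟩
  · rw [hM]; exact xpt_mem_M
  · intro u v w hli hST
    rw [hM, comp_eq] at hST
    have hq : ∀ i : Fin 4, ∃ r : Fin 3 → ℝ,
        qpt i = r 0 • u + r 1 • v + r 2 • w := fun i => exists_rep hli (qpt i)
    choose r hr using hq
    have hk : ∀ i : Fin 4, ∃ k : Fin 3, r i k ≤ 0 := by
      intro i
      by_contra hcon
      push_neg at hcon
      have : qpt i ∈ Sset := by
        rw [hST]
        exact ⟨r i 0, r i 1, r i 2, hcon 0, hcon 1, hcon 2, hr i⟩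
      exact qpt_not_mem i this
    choose k hk using hk
    obtain ⟨i, j, hij, hkij⟩ := Fintype.exists_ne_map_eq_of_card_lt k (by norm_num)
    have hmS : qpt i + qpt j ∈ Sset := qpt_sum_mem hij
    rw [hST] at hmS
    obtain ⟨a, b, c, ha, hb, hc, hsum⟩ := hmS
    have hsum2 : qpt i + qpt j =
        (r i 0 + r j 0) • u + (r i 1 + r j 1) • v + (r i 2 + r j 2) • w := by
      rw [hr i, hr j]; module
    obtain ⟨h0, h1, h2⟩ := rep_unique hli (hsum.symm.trans hsum2)
    have hks : r i (k i) ≤ 0 := hk i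
    have hkj : r j (k i) ≤ 0 := hkij ▸ hk j
    have h3 : k i = 0 ∨ k i = 1 ∨ k i = 2 := by omega
    rcases h3 with h3 | h3 | h3 <;> rw [h3] at hks hkj <;> linarith
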